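/- If Ker L^Ψ_I ∩ W = {0}, then Ker L^Ψ_I = Img L^Φ_I, where I ∈ GL_n(ℝ) is the identity matrix (so its columns are the standard basis vectors e_1,…,e_n). -/

import Mathlib

open scoped RealInnerProductSpace

noncomputable section

/-- `ℝ^n` with the Euclidean inner product and norm. -/
abbrev E (n : ℕ) : Type := EuclideanSpace ℝ (Fin n)

/-- The symmetric bilinear map `Q_v(ξ,η) = ⟨ξ,η⟩·v − ⟨ξ,v⟩·η − ⟨η,v⟩·ξ`. -/
def Qv {n : ℕ} (v ξ η : E n) : E n := ⟪ξ, η⟫ • v - ⟪ξ, v⟫ • η - ⟪η, v⟫ • ξ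

/-- The bracket `[Q,Q']` of two (symmetric bilinear) maps. -/
def brk {n : ℕ} (Q Q' : E n → E n → E n) (ξ η θ : E n) : E n :=
  (Q ξ (Q' η θ) + Q η (Q' θ ξ) + Q θ (Q' ξ η))
    - (Q' ξ (Q η θ) + Q' η (Q θ ξ) + Q' θ (Q ξ η))

/-- A map `ℝ^n × ℝ^n → ℝ^n` is a symmetric bilinear map. -/
def IsSymmBilin {n : ℕ} (q : E n → E n → E n) : Prop :=
  (∀ ξ η, q ξ η = q η ξ) ∧ ∀ ξ, IsLinearMap ℝ (q ξ)

/-- The standard basis vectors `e_1, …, e_n` of `ℝ^n`. -/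
def stdE (n : ℕ) (i : Fin n) : E n := EuclideanSpace.single i 1

/-- The `i`-th component of `L^Φ_B (A', B')`, where `v = v_i` is the `i`-th column of `B`
and `ω = ω_i` the `i`-th column of `B'`. -/
def LPhiC {n : ℕ} (A' : E n →ₗ[ℝ] E n) (v ω : E n) (ξ η : E n) : E n :=
  A' (Qv v ξ η) - Qv v (A' ξ) η - Qv v ξ (A' η) + Qv ω ξ η

/-- `(q_1,…,q_n)` lies in the kernel of `L^Ψ_B`, where `v i` are the columns of `B`. -/
def KerPsi {n : ℕ} (v : Fin n → E n) (q : Fin n → E n → E n → E n) : Prop :=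
  ∀ i j : Fin n, i < j → ∀ ξ η θ : E n,
    brk (q i) (Qv (v j)) ξ η θ = brk (q j) (Qv (v i)) ξ η θ

/-- `(q_1,…,q_n)` lies in the subspace `W`; `i0` is the index of the first coordinate. -/
def memW {n : ℕ} (i0 : Fin n) (q : Fin n → E n → E n → E n) : Prop :=
  (∀ j, q j (stdE n j) (stdE n j) = 0) ∧
  (∀ i j, ⟪stdE n i, q j (stdE n i) (stdE n i)⟫ + ⟪stdE n j, q i (stdE n j) (stdE n j)⟫ = 0) ∧
  (∀ j, ⟪stdE n i0, q i0 (stdE n j) (stdE n j)⟫ = 0)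



section Helpers

variable {n : ℕ}

lemma stdE_inner (i j : Fin n) : ⟪stdE n i, stdE n j⟫ = if i = j then (1:ℝ) else 0 := by
  simp [stdE, EuclideanSpace.inner_single_left, EuclideanSpace.single_apply, eq_comm]

set_option maxHeartbeats 2000000 in
lemma key_lemma (A : E n →ₗ[ℝ] E n) (v w x y ξ η θ : E n) :
    brk (LPhiC A v x) (Qv w) ξ η θ = brk (LPhiC A w y) (Qv v) ξ η θ := by
  simp only [brk, LPhiC, Qv, map_sub, map_smul, inner_sub_left, inner_sub_right,
    real_inner_smul_left, real_inner_smul_right, inner_add_left, inner_add_right,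
    map_add, smul_sub, smul_smul, real_inner_comm]
  module

lemma brk_sub (f g : E n → E n → E n) (w ξ η θ : E n) :
    brk (fun x y => f x y - g x y) (Qv w) ξ η θ
      = brk f (Qv w) ξ η θ - brk g (Qv w) ξ η θ := by
  simp only [brk, Qv, inner_sub_left, inner_sub_right, sub_smul, smul_sub]
  module

lemma LPhi_symm (A : E n →ₗ[ℝ] E n) (v ω ξ η : E n) :
    LPhiC A v ω ξ η = LPhiC A v ω η ξ := by
  simp only [LPhiC, Qv, map_sub, map_smul, real_inner_comm]
  module

lemma LPhi_add (A : E n →ₗ[ℝ] E n) (v ω ξ x y : E n) :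
    LPhiC A v ω ξ (x + y) = LPhiC A v ω ξ x + LPhiC A v ω ξ y := by
  simp only [LPhiC, Qv, inner_add_left, inner_add_right, map_add, map_smul, map_sub,
    add_smul, smul_add]
  module

lemma LPhi_smul (A : E n →ₗ[ℝ] E n) (v ω ξ x : E n) (c : ℝ) :
    LPhiC A v ω ξ (c • x) = c • LPhiC A v ω ξ x := by
  simp only [LPhiC, Qv, real_inner_smul_left, real_inner_smul_right, map_smul, map_sub,
    smul_smul, smul_sub, smul_add]
  module

lemma LPhi_vv (A : E n →ₗ[ℝ] E n) (v ω : E n) (hv : ⟪v, v⟫ = (1:ℝ)) :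
    LPhiC A v ω v v = A v + ω - (2 * ⟪v, ω⟫) • v := by
  simp only [LPhiC, Qv, hv, map_sub, map_smul, one_smul, real_inner_comm]
  module

lemma LPhi_ww (A : E n →ₗ[ℝ] E n) (v ω w : E n) (hw : ⟪w, w⟫ = (1:ℝ))
    (hvw : ⟪v, w⟫ = (0:ℝ)) :
    ⟪w, LPhiC A v ω w w⟫ = ⟪w, A v⟫ + 2 * ⟪v, A w⟫ - ⟪w, ω⟫ := by
  have hwv : ⟪w, v⟫ = (0:ℝ) := by rw [real_inner_comm]; exact hvw
  simp only [LPhiC, Qv, map_sub, map_smul, inner_sub_left, inner_sub_right,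
    real_inner_smul_left, real_inner_smul_right, inner_add_left, inner_add_right,
    one_smul, zero_smul, map_zero, inner_zero_right, inner_zero_left,
    real_inner_comm, hw, hvw, hwv]
  ring

lemma LPhi_vw (A : E n →ₗ[ℝ] E n) (v ω w : E n) (hv : ⟪v, v⟫ = (1:ℝ))
    (hw : ⟪w, w⟫ = (1:ℝ)) (hvw : ⟪v, w⟫ = (0:ℝ)) :
    ⟪v, LPhiC A v ω w w⟫ = ⟪v, A v⟫ - 2 * ⟪w, A w⟫ + ⟪v, ω⟫ := by
  have hwv : ⟪w, v⟫ = (0:ℝ) := by rw [real_inner_comm]; exact hvw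
  simp only [LPhiC, Qv, map_sub, map_smul, inner_sub_left, inner_sub_right,
    real_inner_smul_left, real_inner_smul_right, inner_add_left, inner_add_right,
    one_smul, zero_smul, map_zero, inner_zero_right, inner_zero_left,
    real_inner_comm, hv, hw, hvw, hwv]
  ring

end Helpers

set_option maxHeartbeats 2000000 in
/-- Lemma `lemma:H`: if `Ker L^Ψ_I ∩ W = {0}`, then `Ker L^Ψ_I = Img L^Φ_I`,
where `I` is the identity matrix, whose columns are the standard basis vectors. -/
theorem stmt4 {n : ℕ} (hn : 1 ≤ n)
    (hW : ∀ q : Fin n → E n → E n → E n, (∀ i, IsSymmBilin (q i)) →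
      KerPsi (stdE n) q → memW ⟨0, by omega⟩ q → ∀ i ξ η, q i ξ η = 0) :
    ∀ q : Fin n → E n → E n → E n, (∀ i, IsSymmBilin (q i)) →
      (KerPsi (stdE n) q ↔ ∃ (A' : E n →ₗ[ℝ] E n) (ω : Fin n → E n),
        ∀ i ξ η, q i ξ η = LPhiC A' (stdE n i) (ω i) ξ η) := by
  intro q hq
  constructor
  · intro hKer
    set i0 : Fin n := ⟨0, by omega⟩ with hi0
    set a : Fin n → Fin n → ℝ := fun k j =>
      if k = j then
        (if j = i0 then 0 else
          -(⟪stdE n i0, q i0 (stdE n i0) (stdE n i0)⟫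
            + ⟪stdE n i0, q i0 (stdE n j) (stdE n j)⟫) / 2)
      else
        (⟪stdE n k, q j (stdE n k) (stdE n k)⟫ + ⟪stdE n j, q k (stdE n j) (stdE n j)⟫
          + ⟪stdE n k, q j (stdE n j) (stdE n j)⟫
          + ⟪stdE n j, q k (stdE n k) (stdE n k)⟫) / 8 with ha
    set A' : E n →ₗ[ℝ] E n :=
      (EuclideanSpace.basisFun (Fin n) ℝ).toBasis.constr ℝ
        (fun j => ∑ k, a k j • stdE n k) with hA'
    have hA1 : ∀ j, A' (stdE n j) = ∑ k, a k j • stdE n k := by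
      intro j
      have hb : stdE n j = (EuclideanSpace.basisFun (Fin n) ℝ).toBasis j := by
        simp [stdE, EuclideanSpace.basisFun_apply]
      rw [hb, hA']
      exact Module.Basis.constr_basis _ _ _ _
    have hA : ∀ k j, ⟪stdE n k, A' (stdE n j)⟫ = a k j := by
      intro k j
      rw [hA1, inner_sum]
      simp only [real_inner_smul_right, stdE_inner, mul_ite, mul_one, mul_zero,
        Finset.sum_ite_eq, Finset.mem_univ, if_true]
    set D : Fin n → E n := fun j => q j (stdE n j) (stdE n j) - A' (stdE n j) with hD
    set ω : Fin n → E n := fun j => D j + (-2 * ⟪stdE n j, D j⟫) • stdE n j with hω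
    set p : Fin n → E n → E n → E n :=
      fun i ξ η => q i ξ η - LPhiC A' (stdE n i) (ω i) ξ η with hp
    have einn : ∀ i j : Fin n, ⟪stdE n i, stdE n j⟫ = if i = j then (1:ℝ) else 0 :=
      stdE_inner
    have hωgen : ∀ k l : Fin n, k ≠ l →
        ⟪stdE n k, ω l⟫ = ⟪stdE n k, q l (stdE n l) (stdE n l)⟫ - a k l := by
      intro k l hkl
      simp only [hω, hD, inner_add_right, inner_sub_right, real_inner_smul_right, hA, einn]
      simp [hkl]
    have h1 : ∀ j, p j (stdE n j) (stdE n j) = 0 := by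
      intro j
      have hvv : ⟪stdE n j, stdE n j⟫ = (1:ℝ) := by rw [einn]; simp
      have hωj : ⟪stdE n j, ω j⟫ = -⟪stdE n j, D j⟫ := by
        simp only [hω, inner_add_right, real_inner_smul_right, hvv]
        ring
      simp only [hp]
      rw [LPhi_vv A' (stdE n j) (ω j) hvv, hωj]
      simp only [hω, hD]
      module
    have h2 : ∀ i j, ⟪stdE n i, p j (stdE n i) (stdE n i)⟫
        + ⟪stdE n j, p i (stdE n j) (stdE n j)⟫ = 0 := by
      intro i j
      by_cases hij : i = j
      · subst hij; rw [h1]; simp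
      · have e1 : ∀ k l : Fin n, k ≠ l →
            ⟪stdE n k, p l (stdE n k) (stdE n k)⟫
              = ⟪stdE n k, q l (stdE n k) (stdE n k)⟫
                - (a k l + 2 * a l k
                  - (⟪stdE n k, q l (stdE n l) (stdE n l)⟫ - a k l)) := by
          intro k l hkl
          have hkk : ⟪stdE n k, stdE n k⟫ = (1:ℝ) := by rw [einn]; simp
          have hlk : ⟪stdE n l, stdE n k⟫ = (0:ℝ) := by
            rw [einn]; simp [Ne.symm hkl]
          simp only [hp]
          rw [inner_sub_right, LPhi_ww A' (stdE n l) (ω l) (stdE n k) hkk hlk, hA, hA,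
            hωgen k l hkl]
        rw [e1 i j hij, e1 j i (Ne.symm hij)]
        simp only [ha, if_neg hij, if_neg (Ne.symm hij)]
        ring
    have h3 : ∀ j, ⟪stdE n i0, p i0 (stdE n j) (stdE n j)⟫ = 0 := by
      intro j
      by_cases hj : j = i0
      · subst hj; rw [h1]; simp
      · have hii : ⟪stdE n i0, stdE n i0⟫ = (1:ℝ) := by rw [einn]; simp
        have hjj : ⟪stdE n j, stdE n j⟫ = (1:ℝ) := by rw [einn]; simp
        have h0 : ⟪stdE n i0, stdE n j⟫ = (0:ℝ) := by
          rw [einn]; simp [Ne.symm hj]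
        have hωd : ⟪stdE n i0, ω i0⟫
            = a i0 i0 - ⟪stdE n i0, q i0 (stdE n i0) (stdE n i0)⟫ := by
          simp only [hω, hD, inner_add_right, inner_sub_right, real_inner_smul_right,
            hA, einn]
          simp; ring
        simp only [hp]
        rw [inner_sub_right, LPhi_vw A' (stdE n i0) (ω i0) (stdE n j) hii hjj h0,
          hA, hA, hωd]
        simp only [ha, eq_self_iff_true, if_true, if_neg hj]
        ring
    have hpker : KerPsi (stdE n) p := by
      intro i j hij ξ η θ
      simp only [hp]
      rw [brk_sub (q i) (LPhiC A' (stdE n i) (ω i)) (stdE n j) ξ η θ,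
        brk_sub (q j) (LPhiC A' (stdE n j) (ω j)) (stdE n i) ξ η θ,
        hKer i j hij ξ η θ,
        key_lemma A' (stdE n i) (stdE n j) (ω i) (ω j) ξ η θ]
    have hpsb : ∀ i, IsSymmBilin (p i) := by
      intro i
      constructor
      · intro ξ η
        simp only [hp]
        rw [(hq i).1 ξ η, LPhi_symm]
      · intro ξ
        constructor
        · intro x y
          simp only [hp]
          rw [((hq i).2 ξ).map_add, LPhi_add]
          abel
        · intro c x
          simp only [hp]
          rw [((hq i).2 ξ).map_smul, LPhi_smul, smul_sub]
    have hzero : ∀ i ξ η, p i ξ η = 0 := hW p hpsb hpker ⟨h1, h2, h3⟩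
    refine ⟨A', ω, fun i ξ η => ?_⟩
    have hz := hzero i ξ η
    simp only [hp] at hz
    exact sub_eq_zero.mp hz
  · rintro ⟨A', ω, h⟩
    intro i j hij ξ η θ
    have hi : q i = LPhiC A' (stdE n i) (ω i) := funext fun ξ => funext fun η => h i ξ η
    have hj' : q j = LPhiC A' (stdE n j) (ω j) := funext fun ξ => funext fun η => h j ξ η
    rw [hi, hj']
    exact key_lemma A' (stdE n i) (stdE n j) (ω i) (ω j) ξ η θ

end
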